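/- Let q, x, y be complex numbers with |q| < 1, |x| ≤ 1, |y| ≤ 1. Then Σ_{n₁,n₂,n₃,n₄ ≥ 0} x^{n₁+n₂+2n₄} y^{n₂+n₃} q^{2C(n₁,2) + 2n₁n₂ + 4n₁n₃ + 4n₃n₄ + n₁ + 3n₂ + 2n₃ + 2n₄} (1 + x²y q^{4+4(n₁+n₃)}) / ((q²;q²)_{n₁}(q²;q²)_{n₂}(q⁴;q⁴)_{n₃}(q⁴;q⁴)_{n₄}) = ((x²yq⁸;q⁴)_∞ / ((x²q²;q⁴)_∞ (xyq³;q²)_∞ (yq²;q⁴)_∞)) · Σ_{n ≥ 0} xⁿ q^{2C(n,2)+n} (1 − x²y² q^{8n+6}) (xyq³;q²)_n (yq²;q⁴)_n / ((q²;q²)_n (x²yq⁸;q⁴)_n). -/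

import Mathlib

set_option maxHeartbeats 1000000

open Finset Filter Complex Topology

/-- The finite q-Pochhammer symbol `(a; q)_n = ∏_{k=0}^{n-1} (1 - a q^k)`. -/
noncomputable def qPoch (a q : ℂ) (n : ℕ) : ℂ :=
  ∏ k ∈ Finset.range n, (1 - a * q ^ k)

/-- The infinite q-Pochhammer symbol `(a; q)_∞ = ∏_{k=0}^{∞} (1 - a q^k)`. -/
noncomputable def qPochInf (a q : ℂ) : ℂ :=
  ∏' k : ℕ, (1 - a * q ^ k)

lemma qPoch_zero (a q : ℂ) : qPoch a q 0 = 1 := by simp [qPoch]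

lemma qPoch_one (a q : ℂ) : qPoch a q 1 = 1 - a := by simp [qPoch]

lemma qPoch_succ (a q : ℂ) (n : ℕ) :
    qPoch a q (n + 1) = qPoch a q n * (1 - a * q ^ n) := by
  simp [qPoch, Finset.prod_range_succ]

lemma qPoch_zero_left (q : ℂ) (n : ℕ) : qPoch 0 q n = 1 := by simp [qPoch]

lemma qPochInf_zero_left (q : ℂ) : qPochInf 0 q = 1 := by simp [qPochInf]

lemma norm_mul_lt_one {u v : ℂ} (hu : ‖u‖ ≤ 1) (hv : ‖v‖ < 1) : ‖u * v‖ < 1 := by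
  rw [norm_mul]
  calc ‖u‖ * ‖v‖ ≤ 1 * ‖v‖ := mul_le_mul_of_nonneg_right hu (norm_nonneg v)
    _ < 1 := by simpa using hv

lemma one_sub_ne_zero_of_norm_lt_one {w : ℂ} (h : ‖w‖ < 1) : (1 : ℂ) - w ≠ 0 := by
  intro hc
  have : w = 1 := by linear_combination -hc
  rw [this] at h; simp at h

lemma factor_ne_zero {a q : ℂ} (ha : ‖a‖ < 1) (hq : ‖q‖ < 1) (k : ℕ) :
    (1 : ℂ) - a * q ^ k ≠ 0 := by
  apply one_sub_ne_zero_of_norm_lt_one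
  calc ‖a * q ^ k‖ = ‖a‖ * ‖q‖ ^ k := by rw [norm_mul, norm_pow]
    _ ≤ ‖a‖ * 1 := mul_le_mul_of_nonneg_left (pow_le_one₀ (norm_nonneg q) hq.le) (norm_nonneg a)
    _ < 1 := by simpa using ha

lemma qPoch_ne_zero {a q : ℂ} (ha : ‖a‖ < 1) (hq : ‖q‖ < 1) (n : ℕ) :
    qPoch a q n ≠ 0 :=
  Finset.prod_ne_zero_iff.2 fun k _ => factor_ne_zero ha hq k
lemma log_summable {a q : ℂ} (hq : ‖q‖ < 1) :
    Summable fun k => Complex.log (1 - a * q ^ k) := by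
  have h0 : Tendsto (fun k : ℕ => ‖a‖ * ‖q‖ ^ k) atTop (𝓝 0) := by
    simpa using (tendsto_pow_atTop_nhds_zero_of_norm_lt_one (by simpa using hq)).const_mul ‖a‖
  obtain ⟨N, hN⟩ := (h0.eventually (eventually_le_nhds (by norm_num : (0:ℝ) < 1/2))).exists_forall_of_atTop
  rw [← summable_nat_add_iff N]
  have hg : Summable fun k : ℕ => 3/2 * (‖a‖ * ‖q‖ ^ N) * ‖q‖ ^ k :=
    (summable_geometric_of_lt_one (norm_nonneg q) hq).mul_left _
  apply Summable.of_norm_bounded hg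
  intro k
  have hb : ‖a‖ * ‖q‖ ^ (k + N) ≤ ‖a‖ * ‖q‖ ^ N := by
    refine mul_le_mul_of_nonneg_left ?_ (norm_nonneg a)
    exact pow_le_pow_of_le_one (norm_nonneg q) hq.le (by omega)
  have h12 : ‖-(a * q ^ (k + N))‖ ≤ 1/2 := by
    rw [norm_neg, norm_mul, norm_pow]
    exact hb.trans (hN N le_rfl)
  have := Complex.norm_log_one_add_half_le_self h12
  have heq : (1 : ℂ) + -(a * q ^ (k + N)) = 1 - a * q ^ (k + N) := by ring
  rw [heq] at this
  refine this.trans ?_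
  rw [norm_neg, norm_mul, norm_pow]
  calc 3/2 * (‖a‖ * ‖q‖ ^ (k + N)) ≤ 3/2 * (‖a‖ * ‖q‖ ^ (N + k)) := by rw [Nat.add_comm]
    _ = 3/2 * (‖a‖ * ‖q‖ ^ N) * ‖q‖ ^ k := by rw [pow_add]; ring
lemma qPochInf_multipliable {a q : ℂ} (ha : ‖a‖ < 1) (hq : ‖q‖ < 1) :
    Multipliable fun k : ℕ => 1 - a * q ^ k :=
  Complex.multipliable_of_summable_log (log_summable hq)

lemma qPoch_tendsto {a q : ℂ} (ha : ‖a‖ < 1) (hq : ‖q‖ < 1) :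
    Tendsto (fun n => qPoch a q n) atTop (𝓝 (qPochInf a q)) :=
  (qPochInf_multipliable ha hq).hasProd.tendsto_prod_nat

lemma qPochInf_ne_zero {a q : ℂ} (ha : ‖a‖ < 1) (hq : ‖q‖ < 1) :
    qPochInf a q ≠ 0 := by
  have := Complex.cexp_tsum_eq_tprod (fun k => factor_ne_zero ha hq k) (log_summable hq)
  rw [qPochInf, ← this]
  exact Complex.exp_ne_zero _

lemma qPoch_add (a q : ℂ) (n m : ℕ) :
    qPoch a q (n + m) = qPoch a q n * qPoch (a * q ^ n) q m := by
  rw [qPoch, qPoch, qPoch, Finset.prod_range_add]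
  congr 1
  apply Finset.prod_congr rfl
  intro k _
  rw [mul_assoc, ← pow_add]

lemma qPochInf_split {a q : ℂ} (ha : ‖a‖ < 1) (hq : ‖q‖ < 1) (n : ℕ) :
    qPochInf a q = qPoch a q n * qPochInf (a * q ^ n) q := by
  have ha' : ‖a * q ^ n‖ < 1 := by
    rw [norm_mul, norm_pow]
    calc ‖a‖ * ‖q‖ ^ n ≤ ‖a‖ * 1 := mul_le_mul_of_nonneg_left
          (pow_le_one₀ (norm_nonneg q) hq.le) (norm_nonneg a)
      _ < 1 := by simpa using ha
  have h1 : Tendsto (fun m => qPoch a q (n + m)) atTop (𝓝 (qPochInf a q)) := by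
    have := (qPoch_tendsto ha hq).comp (tendsto_add_atTop_nat n)
    exact this.congr fun m => by simp [Function.comp, Nat.add_comm]
  have h2 : Tendsto (fun m => qPoch a q n * qPoch (a * q ^ n) q m) atTop
      (𝓝 (qPoch a q n * qPochInf (a * q ^ n) q)) :=
    ((qPoch_tendsto ha' hq).const_mul _)
  exact tendsto_nhds_unique (h1.congr fun m => qPoch_add a q n m) h2
lemma tendsto_norm_bound {f : ℕ → ℂ} {L : ℂ} (h : Tendsto f atTop (𝓝 L)) :
    ∃ B : ℝ, 0 < B ∧ ∀ n, ‖f n‖ ≤ B := by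
  have hn : Tendsto (fun n => ‖f n‖) atTop (𝓝 ‖L‖) := h.norm
  obtain ⟨N, hN⟩ := (hn.eventually (eventually_le_nhds (lt_add_one ‖L‖))).exists_forall_of_atTop
  refine ⟨max (‖L‖ + 1) ((Finset.range (N + 1)).sup' (by simp) fun n => ‖f n‖) + 1, ?_, ?_⟩
  · have h0 : (0:ℝ) ≤ ‖L‖ + 1 := by positivity
    have := le_max_left (‖L‖ + 1) ((Finset.range (N + 1)).sup' (by simp) fun n => ‖f n‖)
    linarith
  · intro n
    rcases le_or_gt N n with hn' | hn'
    · have := hN n hn'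
      refine this.trans (by linarith [le_max_left (‖L‖+1) ((Finset.range (N + 1)).sup' (by simp) fun n => ‖f n‖)])
    · have hmem : n ∈ Finset.range (N + 1) := by simp; omega
      have := Finset.le_sup' (fun n => ‖f n‖) hmem
      refine this.trans (by linarith [le_max_right (‖L‖+1) ((Finset.range (N + 1)).sup' (by simp) fun n => ‖f n‖)])

lemma tendsto_norm_lower {f : ℕ → ℂ} {L : ℂ} (hL : L ≠ 0)
    (h : Tendsto f atTop (𝓝 L)) (hf : ∀ n, f n ≠ 0) :
    ∃ c : ℝ, 0 < c ∧ ∀ n, c ≤ ‖f n‖ := by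
  have hn : Tendsto (fun n => ‖f n‖) atTop (𝓝 ‖L‖) := h.norm
  have hL2 : (0:ℝ) < ‖L‖ / 2 := by have := norm_pos_iff.2 hL; linarith
  obtain ⟨N, hN⟩ := (hn.eventually (eventually_ge_nhds (by linarith : ‖L‖/2 < ‖L‖))).exists_forall_of_atTop
  refine ⟨min (‖L‖ / 2) ((Finset.range (N + 1)).inf' (by simp) fun n => ‖f n‖), ?_, ?_⟩
  · apply lt_min hL2
    apply (Finset.lt_inf'_iff _).2
    intro n _
    exact norm_pos_iff.2 (hf n)
  · intro n
    rcases le_or_gt N n with hn' | hn'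
    · exact (min_le_left _ _).trans (hN n hn')
    · refine (min_le_right _ _).trans ?_
      exact Finset.inf'_le _ (by simp; omega)
lemma qc_bound {a q : ℂ} (ha : ‖a‖ < 1) (hq : ‖q‖ < 1) :
    ∃ B : ℝ, 0 < B ∧ ∀ n, ‖qPoch a q n / qPoch q q n‖ ≤ B :=
  tendsto_norm_bound ((qPoch_tendsto ha hq).div (qPoch_tendsto hq hq)
    (qPochInf_ne_zero hq hq))

lemma qbinom_summable {a q z : ℂ} (ha : ‖a‖ < 1) (hq : ‖q‖ < 1) (hz : ‖z‖ < 1) :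
    Summable fun n => qPoch a q n / qPoch q q n * z ^ n := by
  obtain ⟨B, hB, hBle⟩ := qc_bound ha hq
  apply Summable.of_norm_bounded (g := fun n => B * ‖z‖ ^ n)
    ((summable_geometric_of_lt_one (norm_nonneg z) hz).mul_left B)
  intro n
  rw [norm_mul, norm_pow]
  exact mul_le_mul_of_nonneg_right (hBle n) (by positivity)

lemma qc_rec {a q : ℂ} (hq : ‖q‖ < 1) (n : ℕ) :
    qPoch a q (n+1) / qPoch q q (n+1) * (1 - q * q ^ n) =
      qPoch a q n / qPoch q q n * (1 - a * q ^ n) := by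
  have h1 : qPoch q q n ≠ 0 := qPoch_ne_zero hq hq n
  have h2 : qPoch q q (n+1) ≠ 0 := qPoch_ne_zero hq hq (n+1)
  rw [qPoch_succ a q n, qPoch_succ q q n] at *
  rw [div_mul_eq_mul_div, div_mul_eq_mul_div, div_eq_div_iff h2 h1]
  ring

-- functional equation
lemma qc_funeq {a q z : ℂ} (ha : ‖a‖ < 1) (hq : ‖q‖ < 1) (hz : ‖z‖ < 1) :
    (1 - z) * ∑' n, qPoch a q n / qPoch q q n * z ^ n =
      (1 - a * z) * ∑' n, qPoch a q n / qPoch q q n * (q * z) ^ n := by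
  set c : ℕ → ℂ := fun n => qPoch a q n / qPoch q q n with hc
  have hqz : ‖q * z‖ < 1 := by
    rw [norm_mul]
    calc ‖q‖ * ‖z‖ ≤ 1 * ‖z‖ := mul_le_mul_of_nonneg_right hq.le (norm_nonneg z)
      _ < 1 := by simpa using hz
  have hS : Summable fun n => c n * z ^ n := qbinom_summable ha hq hz
  have hS' : Summable fun n => c n * (q * z) ^ n := qbinom_summable ha hq hqz
  have hS1 : Summable fun n => c (n+1) * z ^ (n+1) := by
    have := (summable_nat_add_iff 1).2 hS
    simpa using this
  have hS1' : Summable fun n => c (n+1) * (q * z) ^ (n+1) := by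
    have := (summable_nat_add_iff 1).2 hS'
    simpa using this
  have hS2 : Summable fun n => c n * z ^ (n+1) := by
    have := hS.mul_left z
    apply this.congr
    intro n; ring
  have hS2' : Summable fun n => a * c n * q ^ n * z ^ (n+1) := by
    have := hS'.mul_left (a * z)
    apply this.congr
    intro n; rw [mul_pow]; ring
  have e0 : c 0 = 1 := by simp [hc, qPoch]
  have expand : ∀ w : ℂ, Summable (fun n => c n * w ^ n) →
      Summable (fun n => c (n+1) * w ^ (n+1)) →
      ∑' n, c n * w ^ n = 1 + ∑' n, c (n+1) * w ^ (n+1) := by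
    intro w hw hw1
    rw [hw.tsum_eq_zero_add]
    simp [e0]
  have lhs_z : z * ∑' n, c n * z ^ n = ∑' n, c n * z ^ (n+1) := by
    rw [← tsum_mul_left]
    apply tsum_congr; intro n; ring
  have rhs_az : a * z * ∑' n, c n * (q * z) ^ n = ∑' n, a * c n * q ^ n * z ^ (n+1) := by
    rw [← tsum_mul_left]
    apply tsum_congr; intro n; rw [mul_pow]; ring
  have key : ∑' n, c (n+1) * z ^ (n+1) - ∑' n, c n * z ^ (n+1) =
      ∑' n, c (n+1) * (q * z) ^ (n+1) - ∑' n, a * c n * q ^ n * z ^ (n+1) := by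
    rw [← Summable.tsum_sub hS1 hS2, ← Summable.tsum_sub hS1' hS2']
    apply tsum_congr
    intro n
    have hrec := qc_rec (a := a) hq n
    rw [mul_pow]
    have : c (n+1) * (1 - q * q ^ n) = c n * (1 - a * q ^ n) := hrec
    linear_combination z ^ (n+1) * this
  linear_combination (expand z hS hS1) - (expand (q*z) hS' hS1') - lhs_z + rhs_az + key
lemma qc_iter {a q z : ℂ} (ha : ‖a‖ < 1) (hq : ‖q‖ < 1) (hz : ‖z‖ < 1) (N : ℕ) :
    (∑' n, qPoch a q n / qPoch q q n * z ^ n) * ∏ k ∈ range N, (1 - z * q ^ k) =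
      (∏ k ∈ range N, (1 - a * z * q ^ k)) *
        ∑' n, qPoch a q n / qPoch q q n * (q ^ N * z) ^ n := by
  induction N with
  | zero => simp
  | succ N ih =>
    have hw : ‖q ^ N * z‖ < 1 :=
      norm_mul_lt_one (by rw [norm_pow]; exact pow_le_one₀ (norm_nonneg q) hq.le) hz
    have FE := qc_funeq ha hq hw
    rw [prod_range_succ, prod_range_succ]
    have hpow : ∀ n : ℕ, (q * (q ^ N * z)) ^ n = (q ^ (N+1) * z) ^ n := by
      intro n; congr 1; ring
    have FE' : (1 - q ^ N * z) * ∑' n, qPoch a q n / qPoch q q n * (q ^ N * z) ^ n =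
        (1 - a * (q ^ N * z)) * ∑' n, qPoch a q n / qPoch q q n * (q ^ (N+1) * z) ^ n := by
      rw [FE]
      congr 1
      exact tsum_congr fun n => by rw [hpow n]
    linear_combination (1 - z * q ^ N) * ih + (∏ k ∈ range N, (1 - a * z * q ^ k)) * FE'

lemma qc_tendsto_one {a q z : ℂ} (ha : ‖a‖ < 1) (hq : ‖q‖ < 1) (hz : ‖z‖ < 1) :
    Tendsto (fun N => ∑' n, qPoch a q n / qPoch q q n * (q ^ N * z) ^ n) atTop (𝓝 1) := by
  obtain ⟨B, hB, hBle⟩ := qc_bound ha hq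
  have hn : Tendsto (fun N : ℕ => ‖q ^ N * z‖) atTop (𝓝 0) := by
    have := ((tendsto_pow_atTop_nhds_zero_of_norm_lt_one (by simpa using hq)).mul_const z).norm
    simpa using this
  have claim : ∀ w : ℂ, ‖w‖ < 1 →
      ‖(∑' n, qPoch a q n / qPoch q q n * w ^ n) - 1‖ ≤ B * (‖w‖ / (1 - ‖w‖)) := by
    intro w hw
    have hS := qbinom_summable ha hq hw
    have hS1 : Summable fun n => qPoch a q (n+1) / qPoch q q (n+1) * w ^ (n+1) := by
      have := (summable_nat_add_iff 1).2 hS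
      simpa using this
    have e0 : qPoch a q 0 / qPoch q q 0 = 1 := by simp [qPoch]
    have hexp : (∑' n, qPoch a q n / qPoch q q n * w ^ n) - 1 =
        ∑' n, qPoch a q (n+1) / qPoch q q (n+1) * w ^ (n+1) := by
      rw [hS.tsum_eq_zero_add]
      simp [e0]
    rw [hexp]
    have hgeo : Summable fun n : ℕ => B * ‖w‖ ^ (n+1) := by
      have := ((summable_geometric_of_lt_one (norm_nonneg w) hw).mul_left B).mul_left ‖w‖
      apply this.congr
      intro n
      rw [pow_succ]
      ring
    refine (norm_tsum_le_tsum_norm ?_).trans ?_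
    · apply hgeo.of_norm_bounded
      intro n
      rw [norm_norm, norm_mul, norm_pow]
      exact mul_le_mul_of_nonneg_right (hBle (n+1)) (by positivity)
    · have h1 : (∑' n : ℕ, ‖qPoch a q (n+1) / qPoch q q (n+1) * w ^ (n+1)‖) ≤
          ∑' n : ℕ, B * ‖w‖ ^ (n+1) := by
        apply Summable.tsum_le_tsum _ _ hgeo
        · intro n
          rw [norm_mul, norm_pow]
          exact mul_le_mul_of_nonneg_right (hBle (n+1)) (by positivity)
        · apply hgeo.of_norm_bounded
          intro n
          rw [norm_norm, norm_mul, norm_pow]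
          exact mul_le_mul_of_nonneg_right (hBle (n+1)) (by positivity)
      refine h1.trans ?_
      have hgs : ∑' n : ℕ, ‖w‖ ^ (n + 1) = ‖w‖ * (1 - ‖w‖)⁻¹ := by
        have hfe : (fun n : ℕ => ‖w‖ ^ (n+1)) = fun n : ℕ => ‖w‖ * ‖w‖ ^ n := by
          funext n; rw [pow_succ]; ring
        rw [hfe, tsum_mul_left, tsum_geometric_of_lt_one (norm_nonneg w) hw]
      have hX : ∑' n : ℕ, B * ‖w‖ ^ (n+1) = B * (‖w‖ * (1 - ‖w‖)⁻¹) := by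
        rw [tsum_mul_left, hgs]
      rw [hX, div_eq_mul_inv]
  have hbnd : Tendsto (fun N => B * (‖q ^ N * z‖ / (1 - ‖q ^ N * z‖))) atTop (𝓝 0) := by
    have hden : Tendsto (fun N => 1 - ‖q ^ N * z‖) atTop (𝓝 1) := by
      have := tendsto_const_nhds (x := (1:ℝ)) (f := atTop (α := ℕ)) |>.sub hn
      simpa using this
    have := (hn.div hden (by norm_num)).const_mul B
    simpa using this
  have hwN : ∀ N : ℕ, ‖q ^ N * z‖ < 1 := fun N =>
    norm_mul_lt_one (by rw [norm_pow]; exact pow_le_one₀ (norm_nonneg q) hq.le) hz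
  have := squeeze_zero_norm (fun N => claim _ (hwN N)) hbnd
  have h2 : Tendsto (fun N => ((∑' n, qPoch a q n / qPoch q q n * (q ^ N * z) ^ n) - 1) + 1)
      atTop (𝓝 (0 + 1)) := this.add tendsto_const_nhds
  simpa using h2

theorem qbinom {a q z : ℂ} (ha : ‖a‖ < 1) (hq : ‖q‖ < 1) (hz : ‖z‖ < 1) :
    ∑' n, qPoch a q n / qPoch q q n * z ^ n = qPochInf (a * z) q / qPochInf z q := by
  have haz : ‖a * z‖ < 1 := norm_mul_lt_one ha.le hz
  set F := ∑' n, qPoch a q n / qPoch q q n * z ^ n with hF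
  have t1 : Tendsto (fun N => F * ∏ k ∈ range N, (1 - z * q ^ k)) atTop
      (𝓝 (F * qPochInf z q)) :=
    ((qPochInf_multipliable hz hq).hasProd.tendsto_prod_nat).const_mul F
  have t2 : Tendsto (fun N => (∏ k ∈ range N, (1 - a * z * q ^ k)) *
      ∑' n, qPoch a q n / qPoch q q n * (q ^ N * z) ^ n) atTop
      (𝓝 (qPochInf (a * z) q * 1)) :=
    ((qPochInf_multipliable haz hq).hasProd.tendsto_prod_nat).mul (qc_tendsto_one ha hq hz)
  have heq : F * qPochInf z q = qPochInf (a * z) q * 1 :=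
    tendsto_nhds_unique (t1.congr fun N => qc_iter ha hq hz N) t2
  rw [mul_one] at heq
  rw [← heq]
  field_simp [qPochInf_ne_zero hz hq]
theorem euler {q z : ℂ} (hq : ‖q‖ < 1) (hz : ‖z‖ < 1) :
    ∑' n, z ^ n / qPoch q q n = (qPochInf z q)⁻¹ := by
  have h := qbinom (a := 0) (by simp) hq hz
  rw [zero_mul, qPochInf_zero_left] at h
  rw [inv_eq_one_div, ← h]
  apply tsum_congr
  intro n
  rw [qPoch_zero_left]
  ring

lemma norm_uq_lt_one {q u : ℂ} (hq : ‖q‖ < 1) (hu : ‖u‖ ≤ 1) {m : ℕ} (hm : m ≠ 0) :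
    ‖u * q ^ m‖ < 1 :=
  norm_mul_lt_one hu (by rw [norm_pow]; exact pow_lt_one₀ (norm_nonneg q) hq hm)

lemma norm_pow_lt_one {q : ℂ} (hq : ‖q‖ < 1) {m : ℕ} (hm : m ≠ 0) : ‖q ^ m‖ < 1 := by
  rw [norm_pow]; exact pow_lt_one₀ (norm_nonneg q) hq hm

lemma step4 (q x y : ℂ) (hq : ‖q‖ < 1) (hx : ‖x‖ ≤ 1) (hy : ‖y‖ ≤ 1) (n₁ n₂ n₃ : ℕ) :
    ∑' n₄ : ℕ, (x ^ (n₁ + n₂ + 2 * n₄) * y ^ (n₂ + n₃) *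
        q ^ (2 * Nat.choose n₁ 2 + 2*n₁*n₂ + 4*n₁*n₃ + 4*n₃*n₄ + n₁ + 3*n₂ + 2*n₃ + 2*n₄) *
        (1 + x^2*y*q^(4 + 4*(n₁+n₃))) /
        (qPoch (q^2) (q^2) n₁ * qPoch (q^2) (q^2) n₂ * qPoch (q^4) (q^4) n₃ *
          qPoch (q^4) (q^4) n₄))
    = x ^ (n₁ + n₂) * y ^ (n₂ + n₃) *
        q ^ (2 * Nat.choose n₁ 2 + 2*n₁*n₂ + 4*n₁*n₃ + n₁ + 3*n₂ + 2*n₃) *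
        (1 + x^2*y*q^(4 + 4*(n₁+n₃))) * qPoch (x^2*q^2) (q^4) n₃ /
        (qPoch (q^2) (q^2) n₁ * qPoch (q^2) (q^2) n₂ * qPoch (q^4) (q^4) n₃ *
          qPochInf (x^2*q^2) (q^4)) := by
  have hx2 : ‖x ^ 2‖ ≤ 1 := by rw [norm_pow]; exact pow_le_one₀ (norm_nonneg x) hx
  have hq4 : ‖q ^ 4‖ < 1 := norm_pow_lt_one hq (by norm_num)
  have hz : ‖x ^ 2 * q ^ (4 * n₃ + 2)‖ < 1 := norm_uq_lt_one hq hx2 (by omega)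
  have ha : ‖x ^ 2 * q ^ 2‖ < 1 := norm_uq_lt_one hq hx2 (by norm_num)
  have hptw : ∀ n₄ : ℕ, (x ^ (n₁ + n₂ + 2 * n₄) * y ^ (n₂ + n₃) *
        q ^ (2 * Nat.choose n₁ 2 + 2*n₁*n₂ + 4*n₁*n₃ + 4*n₃*n₄ + n₁ + 3*n₂ + 2*n₃ + 2*n₄) *
        (1 + x^2*y*q^(4 + 4*(n₁+n₃))) /
        (qPoch (q^2) (q^2) n₁ * qPoch (q^2) (q^2) n₂ * qPoch (q^4) (q^4) n₃ *
          qPoch (q^4) (q^4) n₄)) =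
      (x ^ (n₁ + n₂) * y ^ (n₂ + n₃) *
        q ^ (2 * Nat.choose n₁ 2 + 2*n₁*n₂ + 4*n₁*n₃ + n₁ + 3*n₂ + 2*n₃) *
        (1 + x^2*y*q^(4 + 4*(n₁+n₃))) /
        (qPoch (q^2) (q^2) n₁ * qPoch (q^2) (q^2) n₂ * qPoch (q^4) (q^4) n₃)) *
        ((x ^ 2 * q ^ (4 * n₃ + 2)) ^ n₄ / qPoch (q^4) (q^4) n₄) := by
    intro n₄
    rw [show n₁ + n₂ + 2 * n₄ = (n₁ + n₂) + 2 * n₄ by ring,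
      show 2 * Nat.choose n₁ 2 + 2*n₁*n₂ + 4*n₁*n₃ + 4*n₃*n₄ + n₁ + 3*n₂ + 2*n₃ + 2*n₄ =
        (2 * Nat.choose n₁ 2 + 2*n₁*n₂ + 4*n₁*n₃ + n₁ + 3*n₂ + 2*n₃) + (4*n₃+2)*n₄ by ring,
      pow_add, pow_add, mul_pow]
    ring
  rw [tsum_congr hptw, tsum_mul_left, euler hq4 hz]
  have hsplit := qPochInf_split ha hq4 n₃
  rw [show x^2*q^2 * (q^4)^n₃ = x^2*q^(4*n₃+2) by rw [← pow_mul, mul_assoc, ← pow_add]; ring_nf]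
    at hsplit
  have h3 : qPoch (x^2*q^2) (q^4) n₃ ≠ 0 := qPoch_ne_zero ha hq4 n₃
  have hInf : qPochInf (x^2*q^2) (q^4) ≠ 0 := qPochInf_ne_zero ha hq4
  have hZ : qPochInf (x^2*q^(4*n₃+2)) (q^4) ≠ 0 :=
    qPochInf_ne_zero hz hq4
  have hid : (qPochInf (x^2*q^(4*n₃+2)) (q^4))⁻¹ =
      qPoch (x^2*q^2) (q^4) n₃ / qPochInf (x^2*q^2) (q^4) := by
    rw [hsplit, div_mul_cancel_left₀ h3]
  rw [hid]
  ring

lemma alg3 (N P1 P2 IA β δ P8 Py w γ S : ℂ)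
    (hδ : δ ≠ 0) (hγ : 1 - γ ≠ 0) (hP8 : P8 ≠ 0) (hPy : Py ≠ 0)
    (hS : S = 1 - w * γ) :
    N / (P1 * P2 * IA) * ((1 - w) * β / ((1 - γ) * δ)) +
      N / (P1 * P2 * IA) * w * (β / δ) =
    N * S * Py * (P8 * β) / (P1 * P2 * P8 * IA * (Py * ((1 - γ) * δ))) := by
  subst hS
  rcases eq_or_ne P1 0 with h | hP1
  · simp [h]
  rcases eq_or_ne P2 0 with h | hP2
  · simp [h]
  rcases eq_or_ne IA 0 with h | hIA
  · simp [h]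
  have hb : P1 * P2 * IA ≠ 0 := mul_ne_zero (mul_ne_zero hP1 hP2) hIA
  have t1 : N / (P1 * P2 * IA) * ((1 - w) * β / ((1 - γ) * δ)) =
      N * ((1 - w) * β) / ((P1 * P2 * IA) * ((1 - γ) * δ)) := div_mul_div_comm _ _ _ _
  have t2 : N / (P1 * P2 * IA) * w * (β / δ) =
      N * w * β / ((P1 * P2 * IA) * δ) := by rw [div_mul_eq_mul_div, div_mul_div_comm]
  have hd1 : (P1 * P2 * IA) * ((1 - γ) * δ) ≠ 0 := mul_ne_zero hb (mul_ne_zero hγ hδ)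
  have hd2 : (P1 * P2 * IA) * δ ≠ 0 := mul_ne_zero hb hδ
  have hd3 : P1 * P2 * P8 * IA * (Py * ((1 - γ) * δ)) ≠ 0 :=
    mul_ne_zero (mul_ne_zero (mul_ne_zero (mul_ne_zero hP1 hP2) hP8) hIA)
      (mul_ne_zero hPy (mul_ne_zero hγ hδ))
  rw [t1, t2, div_add_div _ _ hd1 hd2, div_eq_div_iff (mul_ne_zero hd1 hd2) hd3]
  ring

lemma step3 (q x y : ℂ) (hq : ‖q‖ < 1) (hx : ‖x‖ ≤ 1) (hy : ‖y‖ ≤ 1) (n₁ n₂ : ℕ) :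
    ∑' n₃ : ℕ, (x ^ (n₁ + n₂) * y ^ (n₂ + n₃) *
        q ^ (2 * Nat.choose n₁ 2 + 2*n₁*n₂ + 4*n₁*n₃ + n₁ + 3*n₂ + 2*n₃) *
        (1 + x^2*y*q^(4 + 4*(n₁+n₃))) * qPoch (x^2*q^2) (q^4) n₃ /
        (qPoch (q^2) (q^2) n₁ * qPoch (q^2) (q^2) n₂ * qPoch (q^4) (q^4) n₃ *
          qPochInf (x^2*q^2) (q^4)))
    = x ^ (n₁ + n₂) * y ^ n₂ * q ^ (2 * Nat.choose n₁ 2 + 2*n₁*n₂ + n₁ + 3*n₂) *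
        (1 - x^2*y^2*q^(8*n₁+6)) * qPoch (y*q^2) (q^4) n₁ * qPochInf (x^2*y*q^8) (q^4) /
        (qPoch (q^2) (q^2) n₁ * qPoch (q^2) (q^2) n₂ * qPoch (x^2*y*q^8) (q^4) n₁ *
          qPochInf (x^2*q^2) (q^4) * qPochInf (y*q^2) (q^4)) := by
  have hx2 : ‖x ^ 2‖ ≤ 1 := by rw [norm_pow]; exact pow_le_one₀ (norm_nonneg x) hx
  have hx2y : ‖x ^ 2 * y‖ ≤ 1 := by
    rw [norm_mul]
    exact mul_le_one₀ hx2 (norm_nonneg y) hy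
  have hq4 : ‖q ^ 4‖ < 1 := norm_pow_lt_one hq (by norm_num)
  have hA : ‖x ^ 2 * q ^ 2‖ < 1 := norm_uq_lt_one hq hx2 (by norm_num)
  have hz₁ : ‖y * q ^ (4*n₁+2)‖ < 1 := norm_uq_lt_one hq hy (by omega)
  have hz₂ : ‖y * q ^ (4*n₁+6)‖ < 1 := norm_uq_lt_one hq hy (by omega)
  set D := x ^ (n₁ + n₂) * y ^ n₂ * q ^ (2 * Nat.choose n₁ 2 + 2*n₁*n₂ + n₁ + 3*n₂) /
      (qPoch (q^2) (q^2) n₁ * qPoch (q^2) (q^2) n₂ * qPochInf (x^2*q^2) (q^4)) with hD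
  have hptw : ∀ n₃ : ℕ, (x ^ (n₁ + n₂) * y ^ (n₂ + n₃) *
        q ^ (2 * Nat.choose n₁ 2 + 2*n₁*n₂ + 4*n₁*n₃ + n₁ + 3*n₂ + 2*n₃) *
        (1 + x^2*y*q^(4 + 4*(n₁+n₃))) * qPoch (x^2*q^2) (q^4) n₃ /
        (qPoch (q^2) (q^2) n₁ * qPoch (q^2) (q^2) n₂ * qPoch (q^4) (q^4) n₃ *
          qPochInf (x^2*q^2) (q^4))) =
      D * (qPoch (x^2*q^2) (q^4) n₃ / qPoch (q^4) (q^4) n₃ * (y * q ^ (4*n₁+2)) ^ n₃) +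
      D * (x^2*y*q^(4*n₁+4)) *
        (qPoch (x^2*q^2) (q^4) n₃ / qPoch (q^4) (q^4) n₃ * (y * q ^ (4*n₁+6)) ^ n₃) := by
    intro n₃
    rw [hD, pow_add y n₂ n₃,
      show 2 * Nat.choose n₁ 2 + 2*n₁*n₂ + 4*n₁*n₃ + n₁ + 3*n₂ + 2*n₃ =
        (2 * Nat.choose n₁ 2 + 2*n₁*n₂ + n₁ + 3*n₂) + (4*n₁+2)*n₃ by ring,
      pow_add, mul_pow, mul_pow]
    ring
  rw [tsum_congr hptw,
    Summable.tsum_add ((qbinom_summable hA hq4 hz₁).mul_left D)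
      ((qbinom_summable hA hq4 hz₂).mul_left (D * (x^2*y*q^(4*n₁+4)))),
    tsum_mul_left, tsum_mul_left, qbinom hA hq4 hz₁, qbinom hA hq4 hz₂,
    show x^2*q^2 * (y * q^(4*n₁+2)) = x^2*y*q^(4*n₁+4) by ring,
    show x^2*q^2 * (y * q^(4*n₁+6)) = x^2*y*q^(4*n₁+8) by ring]
  have hα : ‖x^2*y*q^(4*n₁+4)‖ < 1 := norm_uq_lt_one hq hx2y (by omega)
  have hβa : ‖x^2*y*q^(4*n₁+8)‖ < 1 := norm_uq_lt_one hq hx2y (by omega)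
  have h8 : ‖x^2*y*q^8‖ < 1 := norm_uq_lt_one hq hx2y (by omega)
  have h2 : ‖y*q^2‖ < 1 := norm_uq_lt_one hq hy (by omega)
  have sp1 : qPochInf (x^2*y*q^(4*n₁+4)) (q^4) =
      (1 - x^2*y*q^(4*n₁+4)) * qPochInf (x^2*y*q^(4*n₁+8)) (q^4) := by
    have := qPochInf_split hα hq4 1
    rwa [qPoch_one, pow_one,
      show x^2*y*q^(4*n₁+4) * q^4 = x^2*y*q^(4*n₁+8) by ring] at this
  have sp2 : qPochInf (y*q^(4*n₁+2)) (q^4) =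
      (1 - y*q^(4*n₁+2)) * qPochInf (y*q^(4*n₁+6)) (q^4) := by
    have := qPochInf_split hz₁ hq4 1
    rwa [qPoch_one, pow_one,
      show y*q^(4*n₁+2) * q^4 = y*q^(4*n₁+6) by ring] at this
  have sp3 : qPochInf (x^2*y*q^8) (q^4) =
      qPoch (x^2*y*q^8) (q^4) n₁ * qPochInf (x^2*y*q^(4*n₁+8)) (q^4) := by
    have := qPochInf_split h8 hq4 n₁
    rwa [show x^2*y*q^8 * (q^4)^n₁ = x^2*y*q^(4*n₁+8) by ring] at this
  have sp4 : qPochInf (y*q^2) (q^4) =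
      qPoch (y*q^2) (q^4) n₁ * qPochInf (y*q^(4*n₁+2)) (q^4) := by
    have := qPochInf_split h2 hq4 n₁
    rwa [show y*q^2 * (q^4)^n₁ = y*q^(4*n₁+2) by ring] at this
  have ne1 : (1 : ℂ) - y*q^(4*n₁+2) ≠ 0 := one_sub_ne_zero_of_norm_lt_one hz₁
  have neδ : qPochInf (y*q^(4*n₁+6)) (q^4) ≠ 0 := qPochInf_ne_zero hz₂ hq4
  have neP8 : qPoch (x^2*y*q^8) (q^4) n₁ ≠ 0 := qPoch_ne_zero h8 hq4 n₁
  have nePy : qPoch (y*q^2) (q^4) n₁ ≠ 0 := qPoch_ne_zero h2 hq4 n₁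
  rw [hD, sp1, sp3, sp4, sp2]
  exact alg3 _ _ _ _ _ _ _ _ _ _ _ neδ ne1 neP8 nePy (by ring)

lemma step2 (q x y : ℂ) (hq : ‖q‖ < 1) (hx : ‖x‖ ≤ 1) (hy : ‖y‖ ≤ 1) (n₁ : ℕ) :
    ∑' n₂ : ℕ, (x ^ (n₁ + n₂) * y ^ n₂ *
        q ^ (2 * Nat.choose n₁ 2 + 2*n₁*n₂ + n₁ + 3*n₂) *
        (1 - x^2*y^2*q^(8*n₁+6)) * qPoch (y*q^2) (q^4) n₁ * qPochInf (x^2*y*q^8) (q^4) /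
        (qPoch (q^2) (q^2) n₁ * qPoch (q^2) (q^2) n₂ * qPoch (x^2*y*q^8) (q^4) n₁ *
          qPochInf (x^2*q^2) (q^4) * qPochInf (y*q^2) (q^4)))
    = (x ^ n₁ * q ^ (2 * Nat.choose n₁ 2 + n₁) * (1 - x ^ 2 * y ^ 2 * q ^ (8 * n₁ + 6)) *
          qPoch (x * y * q ^ 3) (q ^ 2) n₁ * qPoch (y * q ^ 2) (q ^ 4) n₁ /
          (qPoch (q ^ 2) (q ^ 2) n₁ * qPoch (x ^ 2 * y * q ^ 8) (q ^ 4) n₁)) *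
        (qPochInf (x ^ 2 * y * q ^ 8) (q ^ 4) /
          (qPochInf (x ^ 2 * q ^ 2) (q ^ 4) * qPochInf (x * y * q ^ 3) (q ^ 2) *
            qPochInf (y * q ^ 2) (q ^ 4))) := by
  have hxy : ‖x * y‖ ≤ 1 := by
    rw [norm_mul]; exact mul_le_one₀ hx (norm_nonneg y) hy
  have hq2 : ‖q ^ 2‖ < 1 := norm_pow_lt_one hq (by norm_num)
  have hz : ‖x * y * q ^ (2*n₁+3)‖ < 1 := norm_uq_lt_one hq hxy (by omega)
  have h3 : ‖x * y * q ^ 3‖ < 1 := norm_uq_lt_one hq hxy (by omega)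
  set C := x ^ n₁ * q ^ (2 * Nat.choose n₁ 2 + n₁) *
        (1 - x^2*y^2*q^(8*n₁+6)) * qPoch (y*q^2) (q^4) n₁ * qPochInf (x^2*y*q^8) (q^4) /
        (qPoch (q^2) (q^2) n₁ * qPoch (x^2*y*q^8) (q^4) n₁ *
          qPochInf (x^2*q^2) (q^4) * qPochInf (y*q^2) (q^4)) with hC
  have hptw : ∀ n₂ : ℕ, (x ^ (n₁ + n₂) * y ^ n₂ *
        q ^ (2 * Nat.choose n₁ 2 + 2*n₁*n₂ + n₁ + 3*n₂) *
        (1 - x^2*y^2*q^(8*n₁+6)) * qPoch (y*q^2) (q^4) n₁ * qPochInf (x^2*y*q^8) (q^4) /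
        (qPoch (q^2) (q^2) n₁ * qPoch (q^2) (q^2) n₂ * qPoch (x^2*y*q^8) (q^4) n₁ *
          qPochInf (x^2*q^2) (q^4) * qPochInf (y*q^2) (q^4))) =
      C * ((x * y * q ^ (2*n₁+3)) ^ n₂ / qPoch (q^2) (q^2) n₂) := by
    intro n₂
    rw [hC, pow_add x,
      show 2 * Nat.choose n₁ 2 + 2*n₁*n₂ + n₁ + 3*n₂ =
        (2 * Nat.choose n₁ 2 + n₁) + (2*n₁+3)*n₂ by ring,
      pow_add, mul_pow, mul_pow]
    ring
  rw [tsum_congr hptw, tsum_mul_left, euler hq2 hz]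
  have hsplit := qPochInf_split h3 hq2 n₁
  rw [show x*y*q^3 * (q^2)^n₁ = x*y*q^(2*n₁+3) by ring] at hsplit
  have hP3 : qPoch (x*y*q^3) (q^2) n₁ ≠ 0 := qPoch_ne_zero h3 hq2 n₁
  have hid : (qPochInf (x*y*q^(2*n₁+3)) (q^2))⁻¹ =
      qPoch (x*y*q^3) (q^2) n₁ / qPochInf (x*y*q^3) (q^2) := by
    rw [hsplit, div_mul_cancel_left₀ hP3]
  rw [hid, hC]
  ring

lemma T_summable (q x y : ℂ) (hq : ‖q‖ < 1) (hx : ‖x‖ ≤ 1) (hy : ‖y‖ ≤ 1) :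
    Summable (fun n : ℕ × ℕ × ℕ × ℕ =>
      x ^ (n.1 + n.2.1 + 2 * n.2.2.2) * y ^ (n.2.1 + n.2.2.1) *
          q ^ (2 * Nat.choose n.1 2 + 2 * n.1 * n.2.1 + 4 * n.1 * n.2.2.1 +
            4 * n.2.2.1 * n.2.2.2 + n.1 + 3 * n.2.1 + 2 * n.2.2.1 + 2 * n.2.2.2) *
          (1 + x ^ 2 * y * q ^ (4 + 4 * (n.1 + n.2.2.1))) /
          (qPoch (q ^ 2) (q ^ 2) n.1 * qPoch (q ^ 2) (q ^ 2) n.2.1 *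
            qPoch (q ^ 4) (q ^ 4) n.2.2.1 * qPoch (q ^ 4) (q ^ 4) n.2.2.2)) := by
  have hq2 : ‖q ^ 2‖ < 1 := norm_pow_lt_one hq (by norm_num)
  have hq4 : ‖q ^ 4‖ < 1 := norm_pow_lt_one hq (by norm_num)
  obtain ⟨c2, hc2, hc2le⟩ := tendsto_norm_lower (qPochInf_ne_zero hq2 hq2)
    (qPoch_tendsto hq2 hq2) (qPoch_ne_zero hq2 hq2)
  obtain ⟨c4, hc4, hc4le⟩ := tendsto_norm_lower (qPochInf_ne_zero hq4 hq4)
    (qPoch_tendsto hq4 hq4) (qPoch_ne_zero hq4 hq4)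
  set r := ‖q‖ with hr
  have hr0 : 0 ≤ r := norm_nonneg q
  have Sr : Summable fun n : ℕ => r ^ n := summable_geometric_of_lt_one hr0 hq
  have S2 : Summable fun p : ℕ × ℕ => r ^ p.1 * r ^ p.2 :=
    Sr.mul_of_nonneg Sr (fun n => by positivity) (fun n => by positivity)
  have S3 : Summable fun p : ℕ × ℕ × ℕ => r ^ p.1 * (r ^ p.2.1 * r ^ p.2.2) :=
    Sr.mul_of_nonneg S2 (fun n => by positivity) (fun p => by positivity)
  have S4 : Summable fun p : ℕ × ℕ × ℕ × ℕ =>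
      r ^ p.1 * (r ^ p.2.1 * (r ^ p.2.2.1 * r ^ p.2.2.2)) :=
    Sr.mul_of_nonneg S3 (fun n => by positivity) (fun p => by positivity)
  apply Summable.of_norm_bounded
    (g := fun p : ℕ × ℕ × ℕ × ℕ =>
      2 / (c2 * c2 * (c4 * c4)) * (r ^ p.1 * (r ^ p.2.1 * (r ^ p.2.2.1 * r ^ p.2.2.2))))
    (S4.mul_left _)
  rintro ⟨n₁, n₂, n₃, n₄⟩
  simp only
  rw [norm_div]
  have hnum : ‖x ^ (n₁ + n₂ + 2 * n₄) * y ^ (n₂ + n₃) *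
      q ^ (2 * Nat.choose n₁ 2 + 2 * n₁ * n₂ + 4 * n₁ * n₃ +
        4 * n₃ * n₄ + n₁ + 3 * n₂ + 2 * n₃ + 2 * n₄) *
      (1 + x ^ 2 * y * q ^ (4 + 4 * (n₁ + n₃)))‖ ≤
      r ^ (n₁ + n₂ + n₃ + n₄) * 2 := by
    rw [norm_mul, norm_mul, norm_mul]
    have h1 : ‖x ^ (n₁ + n₂ + 2 * n₄)‖ ≤ 1 := by
      rw [norm_pow]; exact pow_le_one₀ (norm_nonneg x) hx
    have h2 : ‖y ^ (n₂ + n₃)‖ ≤ 1 := by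
      rw [norm_pow]; exact pow_le_one₀ (norm_nonneg y) hy
    have h3 : ‖q ^ (2 * Nat.choose n₁ 2 + 2 * n₁ * n₂ + 4 * n₁ * n₃ +
        4 * n₃ * n₄ + n₁ + 3 * n₂ + 2 * n₃ + 2 * n₄)‖ ≤ r ^ (n₁ + n₂ + n₃ + n₄) := by
      rw [norm_pow]
      apply pow_le_pow_of_le_one hr0 hq.le
      generalize Nat.choose n₁ 2 = m
      omega
    have h4 : ‖(1 : ℂ) + x ^ 2 * y * q ^ (4 + 4 * (n₁ + n₃))‖ ≤ 2 := by
      refine (norm_add_le _ _).trans ?_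
      have : ‖x ^ 2 * y * q ^ (4 + 4 * (n₁ + n₃))‖ ≤ 1 := by
        rw [norm_mul, norm_mul, norm_pow, norm_pow]
        have t1 : ‖x‖ ^ 2 ≤ 1 := pow_le_one₀ (norm_nonneg x) hx
        have t2 : ‖q‖ ^ (4 + 4 * (n₁ + n₃)) ≤ 1 := pow_le_one₀ (norm_nonneg q) hq.le
        have t3 : ‖x‖ ^ 2 * ‖y‖ ≤ 1 := mul_le_one₀ t1 (norm_nonneg y) hy
        exact mul_le_one₀ t3 (pow_nonneg (norm_nonneg q) _) t2
      simp only [norm_one]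
      linarith
    calc ‖x ^ (n₁ + n₂ + 2 * n₄)‖ * ‖y ^ (n₂ + n₃)‖ * ‖q ^ _‖ * ‖(1:ℂ) + _‖
        ≤ 1 * 1 * r ^ (n₁ + n₂ + n₃ + n₄) * 2 := by
          refine mul_le_mul (mul_le_mul (mul_le_mul h1 h2 (norm_nonneg _) (by norm_num))
            h3 (norm_nonneg _) (by positivity)) h4 (norm_nonneg _) (by positivity)
      _ = r ^ (n₁ + n₂ + n₃ + n₄) * 2 := by ring
  have hden : c2 * c2 * (c4 * c4) ≤ ‖qPoch (q ^ 2) (q ^ 2) n₁ * qPoch (q ^ 2) (q ^ 2) n₂ *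
      qPoch (q ^ 4) (q ^ 4) n₃ * qPoch (q ^ 4) (q ^ 4) n₄‖ := by
    rw [norm_mul, norm_mul, norm_mul]
    calc c2 * c2 * (c4 * c4) = c2 * c2 * c4 * c4 := by ring
      _ ≤ ‖qPoch (q ^ 2) (q ^ 2) n₁‖ * ‖qPoch (q ^ 2) (q ^ 2) n₂‖ *
          ‖qPoch (q ^ 4) (q ^ 4) n₃‖ * ‖qPoch (q ^ 4) (q ^ 4) n₄‖ := by
        refine mul_le_mul (mul_le_mul (mul_le_mul (hc2le n₁) (hc2le n₂) hc2.le
          (norm_nonneg _)) (hc4le n₃) hc4.le (by positivity)) (hc4le n₄) hc4.le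
          (by positivity)
  have hCpos : 0 < c2 * c2 * (c4 * c4) := by positivity
  calc ‖_‖ / ‖_‖ ≤ (r ^ (n₁ + n₂ + n₃ + n₄) * 2) / (c2 * c2 * (c4 * c4)) :=
        div_le_div₀ (by positivity) hnum hCpos hden
    _ = 2 / (c2 * c2 * (c4 * c4)) * (r ^ n₁ * (r ^ n₂ * (r ^ n₃ * r ^ n₄))) := by
        rw [pow_add, pow_add, pow_add]; ring

/-- The reduction of the full quadruple sum (with the extra `1 + x²yq^{4+4(n₁+n₃)}` factor)
to a single sum of Rogers–Ramanujan type. -/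
theorem quadruple_sum_to_single_sum (q x y : ℂ) (hq : ‖q‖ < 1)
    (hx : ‖x‖ ≤ 1) (hy : ‖y‖ ≤ 1) :
    ∑' n : ℕ × ℕ × ℕ × ℕ,
        x ^ (n.1 + n.2.1 + 2 * n.2.2.2) * y ^ (n.2.1 + n.2.2.1) *
          q ^ (2 * Nat.choose n.1 2 + 2 * n.1 * n.2.1 + 4 * n.1 * n.2.2.1 +
            4 * n.2.2.1 * n.2.2.2 + n.1 + 3 * n.2.1 + 2 * n.2.2.1 + 2 * n.2.2.2) *
          (1 + x ^ 2 * y * q ^ (4 + 4 * (n.1 + n.2.2.1))) /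
          (qPoch (q ^ 2) (q ^ 2) n.1 * qPoch (q ^ 2) (q ^ 2) n.2.1 *
            qPoch (q ^ 4) (q ^ 4) n.2.2.1 * qPoch (q ^ 4) (q ^ 4) n.2.2.2) =
      qPochInf (x ^ 2 * y * q ^ 8) (q ^ 4) /
        (qPochInf (x ^ 2 * q ^ 2) (q ^ 4) * qPochInf (x * y * q ^ 3) (q ^ 2) *
          qPochInf (y * q ^ 2) (q ^ 4)) *
      ∑' n : ℕ,
        x ^ n * q ^ (2 * Nat.choose n 2 + n) * (1 - x ^ 2 * y ^ 2 * q ^ (8 * n + 6)) *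
          qPoch (x * y * q ^ 3) (q ^ 2) n * qPoch (y * q ^ 2) (q ^ 4) n /
          (qPoch (q ^ 2) (q ^ 2) n * qPoch (x ^ 2 * y * q ^ 8) (q ^ 4) n) := by
  have hT := T_summable q x y hq hx hy
  refine (Summable.tsum_prod hT).trans ?_
  refine (tsum_congr (fun n₁ => (Summable.tsum_prod (hT.prod_factor n₁)).trans
    ((tsum_congr (fun n₂ => (Summable.tsum_prod ((hT.prod_factor n₁).prod_factor n₂)).trans
      ((tsum_congr (fun n₃ => step4 q x y hq hx hy n₁ n₂ n₃)).trans
        (step3 q x y hq hx hy n₁ n₂)))).trans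
      (step2 q x y hq hx hy n₁)))).trans ?_
  rw [tsum_mul_right, mul_comm]
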